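/- Let a, b, c be nonnegative real numbers with a + b + c = 1, and let i, i', i~, i^ : ℕ → ℝ satisfy the Merrifield–Simmons recurrence system. Set P = 5 + 3a + 7b + 5c, Q = 25a − 11b + 7c, σ = √(P² + 4Q), and λ = (P + σ)/2. Then the sequence n ↦ i(n)/λⁿ converges, and its limit is (18λ + 2Q)/(λσ). (This is the asymptotic behavior of the expected Merrifield–Simmons index of the random hexagonal cactus R_n(a,b,c): i(n) grows like ((18λ + 2Q)/(λσ))·λⁿ.) -/

import Mathlib

/-- Theorem 6 (asymptotics of the expected Merrifield–Simmons index of random hexagonal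
cacti): i(n)/λⁿ converges to (18λ + 2Q)/(λσ). -/
theorem merrifield_simmons_asymptotics (a b c : ℝ) (ha : 0 ≤ a) (hb : 0 ≤ b) (hc : 0 ≤ c)
    (habc : a + b + c = 1)
(i i' it ih : ℕ → ℝ)
    (hi0 : i 0 = 1) (hi1 : i 1 = 18)
    (hi'0 : i' 0 = 13) (hit0 : it 0 = 13) (hih0 : ih 0 = 13)
    (hi : ∀ n, 2 ≤ n →
      i n = 5 * i (n - 1) + 8 * a * i' (n - 2) + 8 * b * it (n - 2) + 8 * c * ih (n - 2))
    (hi' : ∀ n, 1 ≤ n →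
      i' n = 5 * i n + 3 * a * i' (n - 1) + 3 * b * it (n - 1) + 3 * c * ih (n - 1))
    (hit : ∀ n, 1 ≤ n →
      it n = 3 * i n + 7 * a * i' (n - 1) + 7 * b * it (n - 1) + 7 * c * ih (n - 1))
    (hih : ∀ n, 1 ≤ n →
      ih n = 4 * i n + 5 * a * i' (n - 1) + 5 * b * it (n - 1) + 5 * c * ih (n - 1))
    (P Q σ lam : ℝ)
    (hP : P = 5 + 3 * a + 7 * b + 5 * c)
    (hQ : Q = 25 * a - 11 * b + 7 * c)
    (hσ : σ = Real.sqrt (P ^ 2 + 4 * Q))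
    (hlam : lam = (P + σ) / 2) :
    Filter.Tendsto (fun n : ℕ => i n / lam ^ n) Filter.atTop
      (nhds ((18 * lam + 2 * Q) / (lam * σ))) := by
  have hP8 : 8 ≤ P := by rw [hP]; nlinarith
  have hD : 0 < P ^ 2 + 4 * Q := by rw [hP, hQ]; nlinarith
  have hσ2 : σ ^ 2 = P ^ 2 + 4 * Q := by rw [hσ]; exact Real.sq_sqrt hD.le
  have hσpos : 0 < σ := by rw [hσ]; exact Real.sqrt_pos.mpr hD
  obtain ⟨μ, hμ⟩ : ∃ x : ℝ, x = (P - σ) / 2 := ⟨_, rfl⟩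
  have hdiff : lam - μ = σ := by rw [hlam, hμ]; ring
  have hsum : lam + μ = P := by rw [hlam, hμ]; ring
  have hprod : lam * μ = -Q := by rw [hlam, hμ]; linear_combination (-1/4 : ℝ) * hσ2
  have hlampos : 0 < lam := by rw [hlam]; nlinarith
  have hlamne : lam ≠ 0 := hlampos.ne'
  have hμlt : |μ| < lam := by
    rw [abs_lt, hlam, hμ]; constructor <;> nlinarith
  have hlam2 : lam ^ 2 = P * lam + Q := by rw [hlam]; linear_combination (1/4 : ℝ) * hσ2
  have hμ2 : μ ^ 2 = P * μ + Q := by rw [hμ]; linear_combination (1/4 : ℝ) * hσ2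
  have h18 : 18 * P + 2 * Q = 194 := by rw [hP, hQ]; linarith
  have hi2 : i 2 = 194 := by
    have h := hi 2 le_rfl
    norm_num at h
    rw [hi1, hi'0, hit0, hih0] at h
    linear_combination h + 104 * habc
  have hrec : ∀ n : ℕ, i (n + 3) = P * i (n + 2) + Q * i (n + 1) := by
    intro n
    have h1 := hi (n + 3) (by omega)
    have h2 := hi (n + 2) (by omega)
    have h3 := hi' (n + 1) (by omega)
    have h4 := hit (n + 1) (by omega)
    have h5 := hih (n + 1) (by omega)
    have e1 : n + 3 - 1 = n + 2 := by omega
    have e2 : n + 3 - 2 = n + 1 := by omega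
    have e3 : n + 2 - 1 = n + 1 := by omega
    have e4 : n + 2 - 2 = n := by omega
    have e5 : n + 1 - 1 = n := by omega
    rw [e1, e2] at h1; rw [e3, e4] at h2; rw [e5] at h3 h4 h5
    rw [hP, hQ]
    linear_combination h1 + 8*a*h3 + 8*b*h4 + 8*c*h5 - (3*a+7*b+5*c)*h2
  have key : ∀ n : ℕ, σ * i (n + 1) = (18 - 2*μ) * lam ^ (n + 1) + (2*lam - 18) * μ ^ (n + 1)
      ∧ σ * i (n + 2) = (18 - 2*μ) * lam ^ (n + 2) + (2*lam - 18) * μ ^ (n + 2) := by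
    intro n
    induction n with
    | zero =>
      constructor
      · rw [hi1]; linear_combination (-18 : ℝ) * hdiff
      · rw [hi2]
        linear_combination (-(18*(lam+μ) - 2*lam*μ))*hdiff - 18*σ*hsum + 2*σ*hprod - σ*h18
    | succ k ihk =>
      refine ⟨ihk.2, ?_⟩
      rw [show k + 1 + 2 = k + 3 from rfl, hrec k]
      linear_combination P * ihk.2 + Q * ihk.1
        - ((18 - 2*μ) * lam ^ (k+1)) * hlam2 - ((2*lam - 18) * μ ^ (k+1)) * hμ2
  have habs : |μ / lam| < 1 := by
    rw [abs_div, abs_of_pos hlampos, div_lt_one hlampos]; exact hμlt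
  have h0 : Filter.Tendsto (fun n : ℕ => (μ / lam) ^ n) Filter.atTop (nhds 0) :=
    tendsto_pow_atTop_nhds_zero_iff.mpr habs
  have htend : Filter.Tendsto
      (fun n : ℕ => (18 - 2*μ)/σ + (2*lam - 18)/σ * (μ/lam) ^ n) Filter.atTop
      (nhds ((18 - 2*μ)/σ)) := by
    have := Filter.Tendsto.add (tendsto_const_nhds (x := (18 - 2*μ)/σ))
      (h0.const_mul ((2*lam - 18)/σ))
    simpa using this
  have hL : (18 * lam + 2 * Q) / (lam * σ) = (18 - 2*μ)/σ := by
    rw [div_eq_div_iff (by positivity) hσpos.ne']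
    linear_combination 2 * σ * hprod
  rw [hL]
  refine Filter.Tendsto.congr' ?_ htend
  filter_upwards [Filter.eventually_ge_atTop 1] with n hn
  obtain ⟨m, rfl⟩ : ∃ m, n = m + 1 := ⟨n - 1, by omega⟩
  have hk := (key m).1
  have hlp : lam ^ (m + 1) ≠ 0 := pow_ne_zero _ hlamne
  have hiv : i (m + 1) = ((18 - 2*μ) * lam ^ (m + 1) + (2*lam - 18) * μ ^ (m + 1)) / σ := by
    rw [eq_div_iff hσpos.ne']; linear_combination hk
  rw [hiv, div_pow]
  field_simp
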